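/- For every Λ > 0 and every real t ≠ 0, the integral ∫_{−1/Λ}^{1/Λ} e^{ist} (|s|/2 − 1/(2Λ)) ds equals (cos(t/Λ) − 1)/t². Consequently, the Fourier transform of the cutoff-regularized one-dimensional fundamental solution −|s|_Λ/2 equals cos(t/Λ)/t² as a tempered distribution, i.e. the regularization multiplies the momentum-space Green's function 1/t² by ρ(t/Λ) = cos(t/Λ). -/

import Mathlib

open Complex MeasureTheory

private lemma deriv_exp_lin (t s : ℝ) :
    HasDerivAt (fun s : ℝ => Complex.exp (Complex.I * s * t))
      (Complex.I * t * Complex.exp (Complex.I * s * t)) s := by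
  have hs : HasDerivAt (fun s : ℝ => (Complex.I * s * t : ℂ)) (Complex.I * t) s := by
    simpa using ((Complex.ofRealCLM.hasDerivAt (x := s)).const_mul Complex.I).mul_const (t : ℂ)
  simpa [mul_comm] using hs.cexp

private lemma alg_m (s a t : ℝ) (htc : (t : ℂ) ≠ 0) (E : ℂ) :
    E * ((-(s : ℂ) - a) / 2) =
      Complex.I * t * E * ((-(s : ℂ) - a) / (2 * Complex.I * t) - 1 / (2 * (t : ℂ) ^ 2)) +
        E * (-1 / (2 * Complex.I * t)) := by
  have h3 : (Complex.I : ℂ) ^ 3 = -Complex.I := by simp [pow_succ, Complex.I_sq]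
  field_simp
  ring_nf
  rw [Complex.I_sq]
  ring

private lemma alg_p (s a t : ℝ) (htc : (t : ℂ) ≠ 0) (E : ℂ) :
    E * (((s : ℂ) - a) / 2) =
      Complex.I * t * E * (((s : ℂ) - a) / (2 * Complex.I * t) + 1 / (2 * (t : ℂ) ^ 2)) +
        E * (1 / (2 * Complex.I * t)) := by
  have h3 : (Complex.I : ℂ) ^ 3 = -Complex.I := by simp [pow_succ, Complex.I_sq]
  field_simp
  ring_nf
  rw [Complex.I_sq]
  ring

/-- For `Λ > 0` and `t ≠ 0`, the integral
`∫_{-1/Λ}^{1/Λ} e^{i s t} (|s|/2 - 1/(2Λ)) ds = (cos(t/Λ) - 1)/t²`,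
so the Fourier transform of the cutoff-regularized one-dimensional fundamental solution
`-|s|_Λ/2` is `cos(t/Λ)/t²`, i.e. the cutoff multiplies `1/t²` by `ρ(t/Λ) = cos(t/Λ)`. -/
theorem fourier_cutoff_one_dim (Λ t : ℝ) (hΛ : 0 < Λ) (ht : t ≠ 0) :
    (∫ s in (-(1 / Λ))..(1 / Λ),
        Complex.exp (Complex.I * s * t) * ((|s| / 2 - 1 / (2 * Λ) : ℝ) : ℂ)) =
      ((Real.cos (t / Λ) - 1) / t ^ 2 : ℝ) := by
  have ha0 : 0 < 1 / Λ := by positivity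
  have htc : (t : ℂ) ≠ 0 := by exact_mod_cast ht
  have hΛ0 : (Λ : ℝ) ≠ 0 := ne_of_gt hΛ
  set a : ℝ := 1 / Λ with ha
  clear_value a
  have hcont : Continuous fun s : ℝ =>
      Complex.exp (Complex.I * s * t) * ((|s| / 2 - 1 / (2 * Λ) : ℝ) : ℂ) := by
    fun_prop
  have hsplit :
      (∫ s in (-a)..a,
          Complex.exp (Complex.I * s * t) * ((|s| / 2 - 1 / (2 * Λ) : ℝ) : ℂ)) =
        (∫ s in (-a)..(0:ℝ),
          Complex.exp (Complex.I * s * t) * ((|s| / 2 - 1 / (2 * Λ) : ℝ) : ℂ)) +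
        (∫ s in (0:ℝ)..a,
          Complex.exp (Complex.I * s * t) * ((|s| / 2 - 1 / (2 * Λ) : ℝ) : ℂ)) :=
    (intervalIntegral.integral_add_adjacent_intervals
      (hcont.intervalIntegrable _ _) (hcont.intervalIntegrable _ _)).symm
  have h2 : (1 : ℝ) / (2 * Λ) = a / 2 := by rw [ha]; field_simp
  have hleft :
      (∫ s in (-a)..(0:ℝ),
          Complex.exp (Complex.I * s * t) * ((|s| / 2 - 1 / (2 * Λ) : ℝ) : ℂ)) =
        (∫ s in (-a)..(0:ℝ),
          Complex.exp (Complex.I * s * t) * ((-(s : ℂ) - a) / 2)) := by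
    apply intervalIntegral.integral_congr
    intro s hs
    have hs' : s ∈ Set.Icc (-a) (0:ℝ) := by
      rwa [Set.uIcc_of_le (by linarith : (-a) ≤ (0:ℝ))] at hs
    have habs : |s| = -s := abs_of_nonpos hs'.2
    simp only [habs, h2]
    push_cast
    ring
  have hright :
      (∫ s in (0:ℝ)..a,
          Complex.exp (Complex.I * s * t) * ((|s| / 2 - 1 / (2 * Λ) : ℝ) : ℂ)) =
        (∫ s in (0:ℝ)..a,
          Complex.exp (Complex.I * s * t) * (((s : ℂ) - a) / 2)) := by
    apply intervalIntegral.integral_congr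
    intro s hs
    have hs' : s ∈ Set.Icc (0:ℝ) a := by
      rwa [Set.uIcc_of_le (le_of_lt ha0)] at hs
    have habs : |s| = s := abs_of_nonneg hs'.1
    simp only [habs, h2]
    push_cast
    ring
  have hFm : ∀ s : ℝ, HasDerivAt
      (fun s : ℝ => Complex.exp (Complex.I * s * t) *
        ((-(s : ℂ) - a) / (2 * Complex.I * t) - 1 / (2 * (t : ℂ) ^ 2)))
      (Complex.exp (Complex.I * s * t) * ((-(s : ℂ) - a) / 2)) s := fun s => by
    have h1 := deriv_exp_lin t s
    have hlin : HasDerivAt (fun s : ℝ => (-(s : ℂ) - (a : ℂ))) (-1 : ℂ) s := by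
      simpa using ((Complex.ofRealCLM.hasDerivAt (x := s)).neg.sub_const (a : ℂ))
    have h2' : HasDerivAt (fun s : ℝ =>
        ((-(s : ℂ) - a) / (2 * Complex.I * t) - 1 / (2 * (t : ℂ) ^ 2)))
        (-1 / (2 * Complex.I * t)) s := by
      simpa [div_eq_mul_inv] using (hlin.mul_const ((2 * Complex.I * (t:ℂ))⁻¹)).sub_const (1 / (2 * (t : ℂ) ^ 2))
    have := h1.mul h2'
    refine this.congr_deriv ?_
    exact (alg_m s a t htc _).symm
  have hFp : ∀ s : ℝ, HasDerivAt
      (fun s : ℝ => Complex.exp (Complex.I * s * t) *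
        (((s : ℂ) - a) / (2 * Complex.I * t) + 1 / (2 * (t : ℂ) ^ 2)))
      (Complex.exp (Complex.I * s * t) * (((s : ℂ) - a) / 2)) s := fun s => by
    have h1 := deriv_exp_lin t s
    have hlin : HasDerivAt (fun s : ℝ => ((s : ℂ) - (a : ℂ))) (1 : ℂ) s := by
      simpa using ((Complex.ofRealCLM.hasDerivAt (x := s)).sub_const (a : ℂ))
    have h2' : HasDerivAt (fun s : ℝ =>
        (((s : ℂ) - a) / (2 * Complex.I * t) + 1 / (2 * (t : ℂ) ^ 2)))
        (1 / (2 * Complex.I * t)) s := by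
      simpa [div_eq_mul_inv] using (hlin.mul_const ((2 * Complex.I * (t:ℂ))⁻¹)).add_const (1 / (2 * (t : ℂ) ^ 2))
    have := h1.mul h2'
    refine this.congr_deriv ?_
    exact (alg_p s a t htc _).symm
  have hcontm : Continuous fun s : ℝ =>
      Complex.exp (Complex.I * s * t) * ((-(s : ℂ) - a) / 2) := by fun_prop
  have hcontp : Continuous fun s : ℝ =>
      Complex.exp (Complex.I * s * t) * (((s : ℂ) - a) / 2) := by fun_prop
  have hIm : (∫ s in (-a)..(0:ℝ),
        Complex.exp (Complex.I * s * t) * ((-(s : ℂ) - a) / 2)) =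
      (Complex.exp (Complex.I * (0:ℝ) * t) *
        ((-((0:ℝ) : ℂ) - a) / (2 * Complex.I * t) - 1 / (2 * (t : ℂ) ^ 2)))
      - (Complex.exp (Complex.I * (-a : ℝ) * t) *
        ((-((-a : ℝ) : ℂ) - a) / (2 * Complex.I * t) - 1 / (2 * (t : ℂ) ^ 2))) :=
    intervalIntegral.integral_eq_sub_of_hasDerivAt (fun s _ => hFm s)
      (hcontm.intervalIntegrable _ _)
  have hIp : (∫ s in (0:ℝ)..a,
        Complex.exp (Complex.I * s * t) * (((s : ℂ) - a) / 2)) =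
      (Complex.exp (Complex.I * (a : ℝ) * t) *
        ((((a : ℝ) : ℂ) - a) / (2 * Complex.I * t) + 1 / (2 * (t : ℂ) ^ 2)))
      - (Complex.exp (Complex.I * (0:ℝ) * t) *
        ((((0:ℝ) : ℂ) - a) / (2 * Complex.I * t) + 1 / (2 * (t : ℂ) ^ 2))) :=
    intervalIntegral.integral_eq_sub_of_hasDerivAt (fun s _ => hFp s)
      (hcontp.intervalIntegrable _ _)
  rw [hsplit, hleft, hright, hIm, hIp]
  have haC : (a : ℂ) = 1 / (Λ : ℂ) := by rw [ha]; push_cast; ring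
  have hΛc : (Λ : ℂ) ≠ 0 := by exact_mod_cast hΛ0
  push_cast
  rw [show Complex.cos ((t:ℂ)/Λ) =
      (Complex.exp ((t:ℂ)/Λ*Complex.I) + Complex.exp (-((t:ℂ)/Λ)*Complex.I))/2 from rfl]
  have e1 : (t:ℂ)/Λ*Complex.I = Complex.I * (a:ℂ) * t := by rw [haC]; ring
  have e2 : -((t:ℂ)/Λ)*Complex.I = Complex.I * (-(a:ℂ)) * t := by rw [haC]; ring
  rw [e1, e2]
  simp only [mul_zero, zero_mul, Complex.exp_zero, Complex.ofReal_zero, neg_zero]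
  field_simp
  ring_nf
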